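/- Let $V_0 \preceq V_1 \preceq \cdots \preceq V_n$ be symmetric positive definite $d \times d$ matrices such that each $V_{i} = V_{i-1} + u_i u_i^T$ for some $u_i \in \mathbb{R}^d$. Then for every $\phi \in \mathbb{R}^d$, $\phi^T V_n \phi \leq \frac{\det(V_n)}{\det(V_0)}\, \phi^T V_0 \phi$. -/

import Mathlib

open Matrix

private lemma cs_aux {d : ℕ} {V : Matrix (Fin d) (Fin d) ℝ} (hV : V.PosSemidef)
    (w φ : Fin d → ℝ) :
    (w ⬝ᵥ (V *ᵥ φ)) ^ 2 ≤ (w ⬝ᵥ (V *ᵥ w)) * (φ ⬝ᵥ (V *ᵥ φ)) := by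
  have hsym : ∀ a b : Fin d → ℝ, a ⬝ᵥ (V *ᵥ b) = b ⬝ᵥ (V *ᵥ a) := by
    intro a b
    rw [dotProduct_mulVec, ← mulVec_transpose]
    have ht : Vᵀ = V := by
      have := hV.1.eq
      rw [conjTranspose_eq_transpose_of_trivial] at this; exact this
    rw [ht, dotProduct_comm]
  have h : ∀ t : ℝ, 0 ≤ (w ⬝ᵥ (V *ᵥ w)) * (t * t) + (2 * (w ⬝ᵥ (V *ᵥ φ))) * t
      + (φ ⬝ᵥ (V *ᵥ φ)) := by
    intro t
    have h0 := hV.dotProduct_mulVec_nonneg (φ + t • w)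
    simp only [star_trivial, mulVec_add, mulVec_smul, dotProduct_add, add_dotProduct,
      smul_dotProduct, dotProduct_smul, smul_eq_mul] at h0
    have h2 := hsym φ w
    have heq : (w ⬝ᵥ (V *ᵥ w)) * (t * t) + (2 * (w ⬝ᵥ (V *ᵥ φ))) * t + (φ ⬝ᵥ (V *ᵥ φ))
        = φ ⬝ᵥ V *ᵥ φ + t * (w ⬝ᵥ V *ᵥ φ) + t * ((φ ⬝ᵥ V *ᵥ w) + t * (w ⬝ᵥ V *ᵥ w)) := by
      rw [h2]; ring
    rw [heq]
    convert h0 using 2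
  have := discrim_le_zero h
  rw [discrim] at this
  nlinarith

private lemma det_step {d : ℕ} {V : Matrix (Fin d) (Fin d) ℝ} (hV : V.PosDef)
    (u : Fin d → ℝ) :
    (V + vecMulVec u u).det = (1 + u ⬝ᵥ (V⁻¹ *ᵥ u)) * V.det := by
  rw [vecMulVec_eq Unit,
    det_add_replicateCol_mul_replicateRow (ι := Unit) (isUnit_iff_ne_zero.2 hV.det_pos.ne') u u]
  rw [mul_comm]
  congr 1
  simp only [det_unique, Matrix.add_apply, Matrix.one_apply_eq, Matrix.mul_apply,
    Finset.univ_unique, Finset.sum_singleton, replicateRow_apply, replicateCol_apply, mulVec, dotProduct,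
    Finset.sum_mul, Finset.mul_sum]
  congr 1
  rw [Finset.sum_comm]
  apply Finset.sum_congr rfl; intros
  apply Finset.sum_congr rfl; intros
  ring

private lemma vmv_mulVec {d : ℕ} (u φ : Fin d → ℝ) :
    vecMulVec u u *ᵥ φ = (u ⬝ᵥ φ) • u := by
  ext i
  simp [vecMulVec, mulVec, dotProduct, Finset.mul_sum, mul_comm, mul_left_comm]

private lemma quad_step {d : ℕ} {V : Matrix (Fin d) (Fin d) ℝ} (hV : V.PosDef)
    (u φ : Fin d → ℝ) :
    φ ⬝ᵥ ((V + vecMulVec u u) *ᵥ φ) ≤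
      ((V + vecMulVec u u).det / V.det) * (φ ⬝ᵥ (V *ᵥ φ)) := by
  have hVu : V *ᵥ (V⁻¹ *ᵥ u) = u := by
    rw [mulVec_mulVec, mul_nonsing_inv _ (isUnit_iff_ne_zero.2 hV.det_pos.ne'), one_mulVec]
  have hcs := cs_aux hV.posSemidef φ (V⁻¹ *ᵥ u)
  rw [hVu] at hcs
  rw [det_step hV u, mul_div_assoc, div_self hV.det_pos.ne', mul_one]
  have hexp : φ ⬝ᵥ ((V + vecMulVec u u) *ᵥ φ) = φ ⬝ᵥ (V *ᵥ φ) + (u ⬝ᵥ φ) ^ 2 := by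
    rw [add_mulVec, dotProduct_add, vmv_mulVec, dotProduct_smul, smul_eq_mul,
      dotProduct_comm φ u, pow_two]
  rw [hexp]
  rw [dotProduct_comm (V⁻¹ *ᵥ u) u, dotProduct_comm φ u] at hcs
  have key : (1 + u ⬝ᵥ (V⁻¹ *ᵥ u)) * (φ ⬝ᵥ (V *ᵥ φ))
      = φ ⬝ᵥ (V *ᵥ φ) + (φ ⬝ᵥ (V *ᵥ φ)) * (u ⬝ᵥ (V⁻¹ *ᵥ u)) := by ring
  rw [key]
  linarith [hcs]

private lemma main_aux {d : ℕ} (V : ℕ → Matrix (Fin d) (Fin d) ℝ) (u : ℕ → (Fin d → ℝ)) :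
    ∀ n : ℕ, (∀ i ≤ n, (V i).PosDef) →
      (∀ i < n, V (i + 1) = V i + vecMulVec (u (i + 1)) (u (i + 1))) →
      ∀ φ : Fin d → ℝ,
        φ ⬝ᵥ (V n *ᵥ φ) ≤ ((V n).det / (V 0).det) * (φ ⬝ᵥ (V 0 *ᵥ φ)) := by
  intro n
  induction n with
  | zero =>
    intro hpd _ φ
    rw [div_self (hpd 0 le_rfl).det_pos.ne', one_mul]
  | succ n ih =>
    intro hpd hstep φ
    have hVn := hpd n (Nat.le_succ n)
    have ihφ := ih (fun i hi => hpd i (hi.trans (Nat.le_succ n)))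
      (fun i hi => hstep i (hi.trans (Nat.lt_succ_self n))) φ
    have hq := quad_step hVn (u (n + 1)) φ
    rw [← hstep n (Nat.lt_succ_self n)] at hq
    have hd0 : 0 < (V 0).det := (hpd 0 (Nat.zero_le _)).det_pos
    have hdn : 0 < (V n).det := hVn.det_pos
    calc φ ⬝ᵥ (V (n + 1) *ᵥ φ)
        ≤ ((V (n + 1)).det / (V n).det) * (φ ⬝ᵥ (V n *ᵥ φ)) := hq
      _ ≤ ((V (n + 1)).det / (V n).det) * (((V n).det / (V 0).det) * (φ ⬝ᵥ (V 0 *ᵥ φ))) := by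
          apply mul_le_mul_of_nonneg_left ihφ
          have := (hpd (n + 1) le_rfl).det_pos
          positivity
      _ = ((V (n + 1)).det / (V 0).det) * (φ ⬝ᵥ (V 0 *ᵥ φ)) := by
          field_simp

theorem telescoping_rank_one_quadratic_bound {d : ℕ} (n : ℕ)
    (V : ℕ → Matrix (Fin d) (Fin d) ℝ) (u : ℕ → (Fin d → ℝ))
    (hpd : ∀ i ≤ n, (V i).PosDef)
    (hstep : ∀ i < n, V (i + 1) = V i + vecMulVec (u (i + 1)) (u (i + 1)))
    (φ : Fin d → ℝ) :
    φ ⬝ᵥ (V n *ᵥ φ) ≤ ((V n).det / (V 0).det) * (φ ⬝ᵥ (V 0 *ᵥ φ)) :=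
  main_aux V u n hpd hstep φ
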